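/- The subsets s₊ = {block matrices [[A,0,0],[B,0,w₂],[v₁ᵗ,0,-tr A]]} and s₋ = {block matrices [[0,C,w₁],[0,D,0],[0,v₂ᵗ,-tr D]]} of sl(2n+1,ℝ) (with A,B,C,D ∈ gl(n,ℝ) and v₁,v₂,w₁,w₂ ∈ ℝⁿ) are Lie subalgebras, and sl(2n+1,ℝ) = s₊ ⊕ s₋ as vector spaces. -/

import Mathlib

open Matrix

namespace Stmt7

def sPlusSet (n : ℕ) : Set (Matrix ((Fin n ⊕ Fin n) ⊕ Unit) ((Fin n ⊕ Fin n) ⊕ Unit) ℝ) :=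
  {X | X.trace = 0 ∧ (∀ i (j : Fin n), X i (Sum.inl (Sum.inr j)) = 0) ∧
    (∀ i : Fin n, X (Sum.inl (Sum.inl i)) (Sum.inr ()) = 0)}

def sMinusSet (n : ℕ) : Set (Matrix ((Fin n ⊕ Fin n) ⊕ Unit) ((Fin n ⊕ Fin n) ⊕ Unit) ℝ) :=
  {X | X.trace = 0 ∧ (∀ i (j : Fin n), X i (Sum.inl (Sum.inl j)) = 0) ∧
    (∀ i : Fin n, X (Sum.inl (Sum.inr i)) (Sum.inr ()) = 0)}

def SpSub (n : ℕ) : Submodule ℝ (Matrix ((Fin n ⊕ Fin n) ⊕ Unit) ((Fin n ⊕ Fin n) ⊕ Unit) ℝ) where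
  carrier := sPlusSet n
  add_mem' := by
    rintro X Y ⟨h1, h2, h3⟩ ⟨g1, g2, g3⟩
    exact ⟨by simp [trace_add, h1, g1], fun i j => by simp [h2, g2],
      fun i => by simp [h3, g3]⟩
  zero_mem' := by refine ⟨by simp, fun i j => rfl, fun i => rfl⟩
  smul_mem' := by
    rintro c X ⟨h1, h2, h3⟩
    exact ⟨by simp [h1], fun i j => by simp [h2], fun i => by simp [h3]⟩

def SmSub (n : ℕ) : Submodule ℝ (Matrix ((Fin n ⊕ Fin n) ⊕ Unit) ((Fin n ⊕ Fin n) ⊕ Unit) ℝ) where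
  carrier := sMinusSet n
  add_mem' := by
    rintro X Y ⟨h1, h2, h3⟩ ⟨g1, g2, g3⟩
    exact ⟨by simp [trace_add, h1, g1], fun i j => by simp [h2, g2],
      fun i => by simp [h3, g3]⟩
  zero_mem' := by refine ⟨by simp, fun i j => rfl, fun i => rfl⟩
  smul_mem' := by
    rintro c X ⟨h1, h2, h3⟩
    exact ⟨by simp [h1], fun i j => by simp [h2], fun i => by simp [h3]⟩

def pPart (n : ℕ) (X : Matrix ((Fin n ⊕ Fin n) ⊕ Unit) ((Fin n ⊕ Fin n) ⊕ Unit) ℝ) :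
    Matrix ((Fin n ⊕ Fin n) ⊕ Unit) ((Fin n ⊕ Fin n) ⊕ Unit) ℝ :=
  Matrix.of fun i j =>
    match i, j with
    | i, Sum.inl (Sum.inl k) => X i (Sum.inl (Sum.inl k))
    | _, Sum.inl (Sum.inr _) => 0
    | Sum.inl (Sum.inl _), Sum.inr _ => 0
    | Sum.inl (Sum.inr k), Sum.inr u => X (Sum.inl (Sum.inr k)) (Sum.inr u)
    | Sum.inr _, Sum.inr _ => -(∑ k : Fin n, X (Sum.inl (Sum.inl k)) (Sum.inl (Sum.inl k)))

theorem stmt7 (n : ℕ) :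
    ∃ Sp Sm : Submodule ℝ
        (Matrix ((Fin n ⊕ Fin n) ⊕ Unit) ((Fin n ⊕ Fin n) ⊕ Unit) ℝ),
      (Sp : Set _) = sPlusSet n ∧ (Sm : Set _) = sMinusSet n ∧
      (∀ x ∈ Sp, ∀ y ∈ Sp, ⁅x, y⁆ ∈ Sp) ∧
      (∀ x ∈ Sm, ∀ y ∈ Sm, ⁅x, y⁆ ∈ Sm) ∧
      Sp ⊓ Sm = ⊥ ∧
      Sp ⊔ Sm = LinearMap.ker
        (Matrix.traceLinearMap ((Fin n ⊕ Fin n) ⊕ Unit) ℝ ℝ) := by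
  refine ⟨SpSub n, SmSub n, rfl, rfl, ?_, ?_, ?_, ?_⟩
  · rintro x ⟨h1, h2, h3⟩ y ⟨g1, g2, g3⟩
    refine ⟨?_, fun i j => ?_, fun i => ?_⟩
    · simp [Ring.lie_def, trace_sub, trace_mul_comm x y]
    · simp [Ring.lie_def, Matrix.sub_apply, mul_apply, h2, g2]
    · simp [Ring.lie_def, Matrix.sub_apply, mul_apply, Fintype.sum_sum_type, h2, g2, h3, g3]
  · rintro x ⟨h1, h2, h3⟩ y ⟨g1, g2, g3⟩
    refine ⟨?_, fun i j => ?_, fun i => ?_⟩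
    · simp [Ring.lie_def, trace_sub, trace_mul_comm x y]
    · simp [Ring.lie_def, Matrix.sub_apply, mul_apply, h2, g2]
    · simp [Ring.lie_def, Matrix.sub_apply, mul_apply, Fintype.sum_sum_type, h2, g2, h3, g3]
  · rw [eq_bot_iff]
    rintro X ⟨⟨h1, h2, h3⟩, ⟨g1, g2, g3⟩⟩
    have hdiag : X (Sum.inr ()) (Sum.inr ()) = 0 := by
      have := h1
      simp [Matrix.trace, Matrix.diag, Fintype.sum_sum_type, h2, g2] at this
      exact this
    have : X = 0 := by
      ext i j
      rcases j with (j | j) | j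
      · exact g2 i j
      · exact h2 i j
      · rcases i with (i | i) | i
        · exact h3 i
        · exact g3 i
        · exact hdiag
    simp [this, Submodule.mem_bot]
  · apply le_antisymm
    · apply sup_le
      · rintro X ⟨h1, _, _⟩; exact h1
      · rintro X ⟨h1, _, _⟩; exact h1
    · intro X hX
      have htr : X.trace = 0 := hX
      rw [Submodule.mem_sup]
      refine ⟨pPart n X, ?_, X - pPart n X, ?_, by abel⟩
      · refine ⟨?_, fun i j => by rcases i with (i|i)|i <;> rfl, fun i => rfl⟩
        simp [Matrix.trace, Matrix.diag, Fintype.sum_sum_type, pPart]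
      · have hPtr : (pPart n X).trace = 0 := by
          simp [Matrix.trace, Matrix.diag, Fintype.sum_sum_type, pPart]
        refine ⟨?_, fun i j => by simp [pPart, Matrix.sub_apply], fun i => by simp [pPart, Matrix.sub_apply]⟩
        simp [trace_sub, htr, hPtr]

end Stmt7
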